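/- Let t be a positive integer. Then for every residual t-tuple (α_1, …, α_t), one has s_{t+1} > ∑_{j=1}^{t} α_j·s_j. -/
import Mathlib


/-- A residual `r`-tuple `(α_1, …, α_r)` (here `α i` encodes `α_{i+1}`):
`0 ≤ α_i ≤ a` for all `i`, and if `α_i = a` for some `i ∈ {2, …, r}`, then
`α_j = 0` for all `j < i`. -/
def IsResidual (a : ℕ) {r : ℕ} (α : Fin r → ℕ) : Prop :=
  (∀ i, α i ≤ a) ∧ ∀ i j : Fin r, α i = a → 1 ≤ (i : ℕ) → j < i → α j = 0

lemma geo_aux (a : ℕ) (ha : 1 ≤ a) : ∀ k t : ℕ, k ≤ t →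
    a ^ k + ∑ j ∈ Finset.Ico k t, (a - 1) * a ^ j = a ^ t := by
  intro k t hkt
  induction t, hkt using Nat.le_induction with
  | base => simp
  | succ t hkt ih =>
    rw [Finset.sum_Ico_succ_top hkt, ← add_assoc, ih, pow_succ]
    cases a with
    | zero => omega
    | succ b => simp [Nat.succ_sub_one]; ring

lemma key_bound (a t : ℕ) (ha : 2 ≤ a) (ht : 0 < t) (α : Fin t → ℕ)
    (hα : IsResidual a α) :
    ∑ i : Fin t, α i * a ^ (i : ℕ) ≤ a ^ t := by
  classical
  set g : ℕ → ℕ := fun j => if h : j < t then α ⟨j, h⟩ else 0 with hg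
  have hgi : ∀ i : Fin t, g (i : ℕ) = α i := by
    intro i; simp [hg, i.isLt]
  have hsum : ∑ i : Fin t, α i * a ^ (i : ℕ) = ∑ j ∈ Finset.range t, g j * a ^ j := by
    rw [← Fin.sum_univ_eq_sum_range (fun j => g j * a ^ j) t]
    exact Finset.sum_congr rfl (fun i _ => by rw [hgi i])
  rw [hsum]
  by_cases hex : ∃ i : Fin t, 1 ≤ (i : ℕ) ∧ α i = a
  · obtain ⟨i, hi1, hia⟩ := hex
    have hzero : ∀ j : Fin t, j < i → α j = 0 := fun j hj => hα.2 i j hia hi1 hj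
    have hlt : ∀ j : Fin t, (i : ℕ) < (j : ℕ) → α j ≤ a - 1 := by
      intro j hj
      by_contra h
      have hja : α j = a := le_antisymm (hα.1 j) (by omega)
      have := hα.2 j i hja (by omega) (by rw [Fin.lt_def]; exact hj)
      omega
    have hit : (i : ℕ) + 1 ≤ t := i.isLt
    rw [Finset.range_eq_Ico, ← Finset.sum_Ico_consecutive _ (Nat.zero_le ((i : ℕ) + 1)) hit,
      Finset.sum_Ico_succ_top (Nat.zero_le (i : ℕ))]
    have h0 : ∑ j ∈ Finset.Ico 0 (i : ℕ), g j * a ^ j = 0 := by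
      apply Finset.sum_eq_zero
      intro j hj
      simp only [Finset.mem_Ico] at hj
      have hjt : j < t := lt_trans hj.2 i.isLt
      have : α ⟨j, hjt⟩ = 0 := hzero ⟨j, hjt⟩ (by rw [Fin.lt_def]; exact hj.2)
      simp [hg, hjt, this]
    rw [h0, zero_add, hgi i, hia]
    calc a * a ^ (i : ℕ) + ∑ j ∈ Finset.Ico ((i : ℕ) + 1) t, g j * a ^ j
        ≤ a ^ ((i : ℕ) + 1) + ∑ j ∈ Finset.Ico ((i : ℕ) + 1) t, (a - 1) * a ^ j := by
          apply Nat.add_le_add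
          · rw [pow_succ]; exact le_of_eq (mul_comm _ _)
          · apply Finset.sum_le_sum
            intro j hj
            simp only [Finset.mem_Ico] at hj
            have hjt : j < t := hj.2
            have : α ⟨j, hjt⟩ ≤ a - 1 := hlt ⟨j, hjt⟩ (by simp only [Fin.val_mk]; omega)
            exact Nat.mul_le_mul_right _ (by simpa [hg, hjt] using this)
      _ = a ^ t := geo_aux a (by omega) _ _ hit
  · push_neg at hex
    have hlt : ∀ j : Fin t, 1 ≤ (j : ℕ) → α j ≤ a - 1 := by
      intro j hj
      have h1 := hα.1 j
      have h2 := hex j hj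
      omega
    have h1t : 1 ≤ t := ht
    rw [Finset.range_eq_Ico, ← Finset.sum_Ico_consecutive _ (Nat.zero_le 1) h1t,
      Finset.sum_Ico_succ_top (Nat.zero_le 0)]
    simp only [Finset.Ico_self, Finset.sum_empty, zero_add, pow_zero, mul_one]
    calc g 0 + ∑ j ∈ Finset.Ico 1 t, g j * a ^ j
        ≤ a ^ 1 + ∑ j ∈ Finset.Ico 1 t, (a - 1) * a ^ j := by
          apply Nat.add_le_add
          · have : g 0 = α ⟨0, ht⟩ := by simp [hg, ht]
            rw [this, pow_one]; exact hα.1 _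
          · apply Finset.sum_le_sum
            intro j hj
            simp only [Finset.mem_Ico] at hj
            have hjt : j < t := hj.2
            have : α ⟨j, hjt⟩ ≤ a - 1 := hlt ⟨j, hjt⟩ hj.1
            exact Nat.mul_le_mul_right _ (by simpa [hg, hjt] using this)
      _ = a ^ t := geo_aux a (by omega) _ _ h1t

lemma int_helper (A B K S P dz az : ℤ) (h1 : K ≤ A) (h2 : K ≤ S * B) (h3 : A = az * B)
    (h5 : 1 ≤ B) (h6 : 2 ≤ az) (hd : 1 ≤ dz) (hK0 : 0 ≤ K) (hS0 : 0 ≤ S) (hPd : dz < P) :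
    P * K - dz * S < P * A - dz := by
  have e1 : 0 ≤ (P - dz) * (A - K) := mul_nonneg (by linarith) (by linarith)
  have e2 : 2 ≤ A - K + S := by
    have hA2 : 2 ≤ A := by nlinarith
    rcases eq_or_lt_of_le hS0 with h | h
    · have hK : K ≤ 0 := by nlinarith
      linarith
    · rcases eq_or_lt_of_le h1 with h' | h'
      · have hb : az * B ≤ S * B := by rw [← h3, ← h']; exact h2
        have : az ≤ S := le_of_mul_le_mul_right hb (by linarith)
        linarith
      · linarith
  have e3 : dz * 1 ≤ dz * (A - K + S - 1) := mul_le_mul_of_nonneg_left (by linarith) (by linarith)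
  nlinarith [e1, e3]

/-- for every positive integer `t` and every residual `t`-tuple
`(α_1, …, α_t)`, one has `s_{t+1} > ∑_{j=1}^{t} α_j·s_j`. -/
theorem stmt_15 (a c d n : ℕ) (ha : 2 ≤ a) (hc : 0 < c) (hd : 0 < d)
    (hdca : d < c * a) (hda : Nat.Coprime d a) (hdc : Nat.Coprime d c) (hn : 0 < n)
    (s : ℕ → ℕ) (hs : ∀ j, s j = c * a ^ (n + j) - d)
    (t : ℕ) (ht : 0 < t) (α : Fin t → ℕ) (hα : IsResidual a α) :
    ∑ i : Fin t, α i * s ((i : ℕ) + 1) < s (t + 1) := by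
  have hd2 : ∀ j, d ≤ c * a ^ (n + j) := by
    intro j
    calc d ≤ c * a := hdca.le
      _ ≤ c * a ^ (n + j) := Nat.mul_le_mul_left c (Nat.le_self_pow (by omega) a)
  have hsz : ∀ j, (s j : ℤ) = (c : ℤ) * (a : ℤ) ^ (n + j) - (d : ℤ) := by
    intro j; rw [hs j, Nat.cast_sub (hd2 j)]; push_cast; ring
  set K : ℕ := ∑ i : Fin t, α i * a ^ (i : ℕ) with hK
  set S : ℕ := ∑ i : Fin t, α i with hS
  have hKle : K ≤ a ^ t := key_bound a t ha ht α hα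
  have hK2 : K ≤ S * a ^ (t - 1) := by
    rw [hS, Finset.sum_mul]
    apply Finset.sum_le_sum
    intro i _
    exact Nat.mul_le_mul_left _ (Nat.pow_le_pow_right (by omega) (by omega))
  rw [← Nat.cast_lt (α := ℤ)]
  push_cast
  rw [hsz]
  have hterm : ∀ i : Fin t, (α i : ℤ) * ((s ((i : ℕ) + 1) : ℕ) : ℤ) =
      ((c : ℤ) * (a : ℤ) ^ (n + 1)) * ((α i : ℤ) * (a : ℤ) ^ (i : ℕ)) - (d : ℤ) * (α i : ℤ) := by
    intro i
    rw [hsz, show n + ((i : ℕ) + 1) = (n + 1) + (i : ℕ) by ring, pow_add]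
    ring
  rw [Finset.sum_congr rfl (fun i _ => hterm i), Finset.sum_sub_distrib,
    ← Finset.mul_sum, ← Finset.mul_sum]
  have hKc : (∑ i : Fin t, (α i : ℤ) * (a : ℤ) ^ (i : ℕ)) = (K : ℤ) := by
    rw [hK]; push_cast; rfl
  have hSc : (∑ i : Fin t, (α i : ℤ)) = (S : ℤ) := by
    rw [hS]; push_cast; rfl
  rw [hKc, hSc]
  have hrhs : (c : ℤ) * (a : ℤ) ^ (n + (t + 1)) = ((c : ℤ) * (a : ℤ) ^ (n + 1)) * (a : ℤ) ^ t := by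
    rw [show n + (t + 1) = (n + 1) + t by ring, pow_add]; ring
  rw [hrhs]
  apply int_helper ((a : ℤ) ^ t) ((a : ℤ) ^ (t - 1)) (K : ℤ) (S : ℤ) _ (d : ℤ) (a : ℤ)
  · exact_mod_cast hKle
  · exact_mod_cast hK2
  · rw [← pow_succ']; congr 1; omega
  · exact one_le_pow₀ (by exact_mod_cast (by omega : (1:ℕ) ≤ a))
  · exact_mod_cast ha
  · exact_mod_cast hd
  · positivity
  · positivity
  · calc (d : ℤ) < (c : ℤ) * (a : ℤ) := by exact_mod_cast hdca
      _ ≤ (c : ℤ) * (a : ℤ) ^ (n + 1) := by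
        apply mul_le_mul_of_nonneg_left _ (by positivity)
        exact le_self_pow₀ (by exact_mod_cast (by omega : (1:ℕ) ≤ a)) (by omega)
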